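/- Fix p ≥ 1, eigenvalues d₁², ..., d_p² ≥ 0 with not all zero, and values u₁, ..., u_p ∈ [0, +∞] (interpreted as h''(β̂_j)). Define g_p(γ) = (1/p) Σ_{i=1}^p 1 / [ (d_i² - γ)·( (1/p) Σ_{j=1}^p 1/(γ + u_j) ) + 1 ] for γ > 0 (with 1/(γ+∞) := 0). If all d_i² > 0, then g_p is well-defined on (0, ∞) (no denominator vanishes). If d_i² = 0 for some i, then g_p is well-defined on (0, ∞) if and only if u_j ≠ 0 for at least one j. -/
import Mathlib


open Set

/-- Average of `1/(γ + u_j)`, with the convention `1/(γ + ∞) = 0`. -/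
noncomputable def avgInv {p : ℕ} (u : Fin p → ENNReal) (γ : ℝ) : ℝ :=
  (1 / (p : ℝ)) * ∑ j, ((ENNReal.ofReal γ + u j)⁻¹).toReal

/-- The `i`-th denominator of the Spectrum-Aware adjustment equation. -/
noncomputable def saDenom {p : ℕ} (d2 : Fin p → ℝ) (u : Fin p → ENNReal)
    (i : Fin p) (γ : ℝ) : ℝ :=
  (d2 i - γ) * avgInv u γ + 1

lemma term_le {γ : ℝ} (hγ : 0 < γ) (v : ENNReal) :
    ((ENNReal.ofReal γ + v)⁻¹).toReal ≤ 1 / γ := by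
  rw [ENNReal.toReal_inv, one_div]
  rcases eq_or_ne v ⊤ with h | h
  · simp [h]
    positivity
  · rw [ENNReal.toReal_add (by simp) h, ENNReal.toReal_ofReal hγ.le]
    exact inv_anti₀ hγ (le_add_of_nonneg_right ENNReal.toReal_nonneg)

lemma term_lt {γ : ℝ} (hγ : 0 < γ) {v : ENNReal} (hv : v ≠ 0) :
    ((ENNReal.ofReal γ + v)⁻¹).toReal < 1 / γ := by
  rw [ENNReal.toReal_inv, one_div]
  rcases eq_or_ne v ⊤ with h | h
  · simp [h]
    positivity
  · rw [ENNReal.toReal_add (by simp) h, ENNReal.toReal_ofReal hγ.le]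
    have hv0 : 0 < v.toReal := ENNReal.toReal_pos hv h
    exact inv_strictAnti₀ hγ (by linarith)

lemma term_zero {γ : ℝ} (hγ : 0 < γ) :
    ((ENNReal.ofReal γ + 0)⁻¹).toReal = 1 / γ := by
  rw [add_zero, ENNReal.toReal_inv, ENNReal.toReal_ofReal hγ.le, one_div]

lemma avgInv_nonneg {p : ℕ} (u : Fin p → ENNReal) (γ : ℝ) :
    0 ≤ avgInv u γ := by
  unfold avgInv
  apply mul_nonneg (by positivity)
  exact Finset.sum_nonneg fun j _ => ENNReal.toReal_nonneg

lemma avgInv_le {p : ℕ} (hp : 0 < p) (u : Fin p → ENNReal) {γ : ℝ} (hγ : 0 < γ) :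
    avgInv u γ ≤ 1 / γ := by
  unfold avgInv
  have hsum : ∑ j, ((ENNReal.ofReal γ + u j)⁻¹).toReal ≤ (p : ℝ) * (1 / γ) := by
    calc ∑ j, ((ENNReal.ofReal γ + u j)⁻¹).toReal
        ≤ ∑ _j : Fin p, (1 / γ) := Finset.sum_le_sum fun j _ => term_le hγ (u j)
      _ = (p : ℝ) * (1 / γ) := by simp [Finset.sum_const, mul_comm]
  have hp' : (0 : ℝ) < p := by exact_mod_cast hp
  calc (1 / (p : ℝ)) * ∑ j, ((ENNReal.ofReal γ + u j)⁻¹).toReal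
      ≤ (1 / (p : ℝ)) * ((p : ℝ) * (1 / γ)) := by
        apply mul_le_mul_of_nonneg_left hsum (by positivity)
    _ = 1 / γ := by field_simp
  
lemma avgInv_lt {p : ℕ} (hp : 0 < p) {u : Fin p → ENNReal} {γ : ℝ} (hγ : 0 < γ)
    (h : ∃ j, u j ≠ 0) : avgInv u γ < 1 / γ := by
  obtain ⟨j0, hj0⟩ := h
  unfold avgInv
  have hsum : ∑ j, ((ENNReal.ofReal γ + u j)⁻¹).toReal < (p : ℝ) * (1 / γ) := by
    calc ∑ j, ((ENNReal.ofReal γ + u j)⁻¹).toReal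
        < ∑ _j : Fin p, (1 / γ) := by
          apply Finset.sum_lt_sum (fun j _ => term_le hγ (u j))
          exact ⟨j0, Finset.mem_univ j0, term_lt hγ hj0⟩
      _ = (p : ℝ) * (1 / γ) := by simp [Finset.sum_const, mul_comm]
  have hp' : (0 : ℝ) < p := by exact_mod_cast hp
  calc (1 / (p : ℝ)) * ∑ j, ((ENNReal.ofReal γ + u j)⁻¹).toReal
      < (1 / (p : ℝ)) * ((p : ℝ) * (1 / γ)) := by
        apply mul_lt_mul_of_pos_left hsum (by positivity)
    _ = 1 / γ := by field_simp

lemma avgInv_eq_of_zero {p : ℕ} (hp : 0 < p) {u : Fin p → ENNReal} {γ : ℝ} (hγ : 0 < γ)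
    (h : ∀ j, u j = 0) : avgInv u γ = 1 / γ := by
  unfold avgInv
  have hp' : (0 : ℝ) < p := by exact_mod_cast hp
  have : ∑ j, ((ENNReal.ofReal γ + u j)⁻¹).toReal = (p : ℝ) * (1 / γ) := by
    calc ∑ j, ((ENNReal.ofReal γ + u j)⁻¹).toReal
        = ∑ _j : Fin p, (1 / γ) := Finset.sum_congr rfl fun j _ => by
          rw [h j]; exact term_zero hγ
      _ = (p : ℝ) * (1 / γ) := by simp [Finset.sum_const, mul_comm]
  rw [this]; field_simp

/-- Well-definedness of the adjustment function `g_p`: if all eigenvalues are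
positive, every denominator is positive for all `γ > 0`; if some eigenvalue
vanishes, the denominators are all positive for all `γ > 0` iff some
`u_j ≠ 0`. -/
theorem gp_well_defined
    {p : ℕ} (hp : 0 < p)
    (d2 : Fin p → ℝ) (hd2 : ∀ i, 0 ≤ d2 i) (hne : ∃ i, d2 i ≠ 0)
    (u : Fin p → ENNReal) :
    ((∀ i, 0 < d2 i) → ∀ γ > (0 : ℝ), ∀ i, 0 < saDenom d2 u i γ) ∧
      ((∃ i, d2 i = 0) →
        ((∀ γ > (0 : ℝ), ∀ i, 0 < saDenom d2 u i γ) ↔ ∃ j, u j ≠ 0)) := by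
  constructor
  · intro hpos γ hγ i
    have hA0 := avgInv_nonneg u γ
    have hA1 := avgInv_le hp u hγ
    unfold saDenom
    rcases eq_or_lt_of_le hA0 with h | h
    · rw [← h]; norm_num
    · have h1 : γ * avgInv u γ ≤ γ * (1 / γ) :=
        mul_le_mul_of_nonneg_left hA1 hγ.le
      have h2 : γ * (1 / γ) = 1 := by field_simp
      nlinarith [mul_pos (hpos i) h]
  · rintro ⟨i0, hi0⟩
    constructor
    · intro hall
      by_contra h
      push_neg at h
      have key := hall 1 one_pos i0
      unfold saDenom at key
      rw [avgInv_eq_of_zero hp one_pos h, hi0] at key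
      norm_num at key
    · rintro ⟨j, hj⟩ γ hγ i
      have hA0 := avgInv_nonneg u γ
      have hAlt := avgInv_lt hp hγ ⟨j, hj⟩
      unfold saDenom
      have h1 : γ * avgInv u γ < γ * (1 / γ) :=
        mul_lt_mul_of_pos_left hAlt hγ
      have h2 : γ * (1 / γ) = 1 := by field_simp
      nlinarith [mul_nonneg (hd2 i) hA0]
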